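/- (Proposition 1, full p-value with t-independent test weight.) Let a ≤ b be real numbers with m = (a + b)/2, let I be a finite index set, let w : I → ℝ with w i ≥ 0 and calibration scores R : I → ℝ with R i ≥ 0 for all i, let v ≥ 0 be the test-point weight, and set S = Σ_{i ∈ I} w i with S + v > 0. Define the SCP p-value p(t) = (Σ_{i ∈ I} w i · 1{R i ≥ max(a − t, t − b)} + v) / (S + v). Then p is quasi-concave on ℝ: every superlevel set {t : p(t) ≥ c} is convex, and consequently for every α ∈ (0, 1) the prediction set Ĉ = {t ∈ ℝ : p(t) > α} is a convex subset of ℝ, i.e., a single connected interval. -/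

import Mathlib

/-- Helper: the p-value at a convex combination is at least the min of the
endpoint values. -/
lemma scp_pvalue_min_le
    (a b : ℝ) {I : Type*} [Fintype I] (w R : I → ℝ)
    (hw : ∀ i, 0 ≤ w i)
    (v : ℝ) (S : ℝ) (hSv : 0 < S + v)
    (x y u u' : ℝ) (hu : 0 ≤ u) (hu' : 0 ≤ u') (huv : u + u' = 1) :
    min ((∑ i : I, w i * (if max (a - x) (x - b) ≤ R i then (1 : ℝ) else 0) + v) / (S + v))
        ((∑ i : I, w i * (if max (a - y) (y - b) ≤ R i then (1 : ℝ) else 0) + v) / (S + v))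
      ≤ (∑ i : I, w i * (if max (a - (u * x + u' * y)) ((u * x + u' * y) - b) ≤ R i
            then (1 : ℝ) else 0) + v) / (S + v) := by
  set t := u * x + u' * y with ht
  have ex : a - t = u * (a - x) + u' * (a - y) := by
    rw [ht]; linear_combination (-a) * huv
  have ey : t - b = u * (x - b) + u' * (y - b) := by
    rw [ht]; linear_combination b * huv
  set M := max (max (a - x) (x - b)) (max (a - y) (y - b)) with hM
  have hconv : max (a - t) (t - b) ≤ M := by
    have h1 : a - t ≤ M := by
      rw [ex]
      calc u * (a - x) + u' * (a - y)
          ≤ u * M + u' * M :=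
            add_le_add (mul_le_mul_of_nonneg_left (le_max_of_le_left (le_max_left _ _)) hu)
              (mul_le_mul_of_nonneg_left (le_max_of_le_right (le_max_left _ _)) hu')
        _ = M := by rw [← add_mul, huv, one_mul]
    have h2 : t - b ≤ M := by
      rw [ey]
      calc u * (x - b) + u' * (y - b)
          ≤ u * M + u' * M :=
            add_le_add (mul_le_mul_of_nonneg_left (le_max_of_le_left (le_max_right _ _)) hu)
              (mul_le_mul_of_nonneg_left (le_max_of_le_right (le_max_right _ _)) hu')
        _ = M := by rw [← add_mul, huv, one_mul]
    exact max_le h1 h2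
  have key : ∀ z : ℝ, max (a - t) (t - b) ≤ max (a - z) (z - b) →
      (∑ i : I, w i * (if max (a - z) (z - b) ≤ R i then (1 : ℝ) else 0) + v) / (S + v)
        ≤ (∑ i : I, w i * (if max (a - t) (t - b) ≤ R i then (1 : ℝ) else 0) + v) / (S + v) := by
    intro z hz
    have hnum : (∑ i : I, w i * (if max (a - z) (z - b) ≤ R i then (1 : ℝ) else 0) + v)
        ≤ (∑ i : I, w i * (if max (a - t) (t - b) ≤ R i then (1 : ℝ) else 0) + v) := by
      apply add_le_add_left
      apply Finset.sum_le_sum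
      intro i _
      split_ifs with h1 h2
      · exact le_refl _
      · exact absurd (hz.trans h1) h2
      · simpa using hw i
      · exact le_refl _
    exact div_le_div_of_nonneg_right hnum hSv.le
  rcases le_total (max (a - x) (x - b)) (max (a - y) (y - b)) with h | h
  · have := key y (hconv.trans (max_le h (le_refl _)))
    exact le_trans (min_le_right _ _) this
  · have := key x (hconv.trans (max_le (le_refl _) h))
    exact le_trans (min_le_left _ _) this

/-- Proposition 1 (full SCP p-value with t-independent test weight): the
normalized p-value
`p(t) = (∑ i, w i · 1{R i ≥ max(a − t, t − b)} + v)/(S + v)`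
is quasi-concave (every superlevel set is convex), and consequently, for every
`α ∈ (0, 1)`, the prediction set `{t : p(t) > α}` is convex, i.e., a single
connected interval. -/
theorem scp_full_pvalue_quasiconcave
    (a b : ℝ) (hab : a ≤ b) (m : ℝ) (hm : m = (a + b) / 2)
    {I : Type*} [Fintype I] (w R : I → ℝ)
    (hw : ∀ i, 0 ≤ w i) (hR : ∀ i, 0 ≤ R i)
    (v : ℝ) (hv : 0 ≤ v)
    (S : ℝ) (hS : S = ∑ i : I, w i) (hSv : 0 < S + v) :
    (∀ c : ℝ, Convex ℝ {t : ℝ |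
      (∑ i : I, w i * (if max (a - t) (t - b) ≤ R i then (1 : ℝ) else 0) + v)
        / (S + v) ≥ c}) ∧
    (∀ α : ℝ, 0 < α → α < 1 → Convex ℝ {t : ℝ |
      (∑ i : I, w i * (if max (a - t) (t - b) ≤ R i then (1 : ℝ) else 0) + v)
        / (S + v) > α}) := by
  constructor
  · intro c x hx y hy u u' hu hu' huv
    simp only [Set.mem_setOf_eq, smul_eq_mul] at *
    exact le_trans (le_min hx hy)
      (scp_pvalue_min_le a b w R hw v S hSv x y u u' hu hu' huv)
  · intro α hα hα1 x hx y hy u u' hu hu' huv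
    simp only [Set.mem_setOf_eq, smul_eq_mul] at *
    exact lt_of_lt_of_le (lt_min hx hy)
      (scp_pvalue_min_le a b w R hw v S hSv x y u u' hu hu' huv)
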